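/- Let 𝒜 ⊆ P(ℕ) be an almost disjoint family. The Isbell–Mrówka space Ψ(𝒜) is star-Menger if and only if: for every function A ↦ f_A from 𝒜 to ℕ^ℕ, there exist finite sets ℱ₁, ℱ₂, … ⊆ 𝒜 such that for every A ∈ 𝒜 there is n with (A \ f_A(n)) ∩ ⋃_{B∈ℱ_n}(B \ f_B(n)) ≠ ∅. -/

import Mathlib

open Set Filter

universe u

/-- Least cardinality of a cofinal subset of a preorder. -/
noncomputable def poCof (α : Type u) [Preorder α] : Cardinal.{u} :=
  sInf { c | ∃ S : Set α, (∀ a : α, ∃ b ∈ S, a ≤ b) ∧ Cardinal.mk S = c }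

/-- `cof([X]^ℵ₀)`: cofinality of the family of countably infinite subsets of `X`,
ordered by inclusion. -/
noncomputable def ctblCof (X : Type u) : Cardinal.{u} :=
  poCof { A : Set X // A.Countable ∧ A.Infinite }

/-- The dominating number 𝔡. -/
noncomputable def dNum : Cardinal :=
  sInf { c | ∃ D : Set (ℕ → ℕ),
    (∀ f : ℕ → ℕ, ∃ g ∈ D, ∀ᶠ n in atTop, f n ≤ g n) ∧ Cardinal.mk D = c }

/-- The unbounding number 𝔟. -/
noncomputable def bNum : Cardinal :=
  sInf { c | ∃ B : Set (ℕ → ℕ),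
    (∀ g : ℕ → ℕ, ∃ f ∈ B, ¬ ∀ᶠ n in atTop, f n ≤ g n) ∧ Cardinal.mk B = c }

/-- An almost disjoint family on ℕ. -/
def AlmostDisjoint (𝒜 : Set (Set ℕ)) : Prop :=
  (∀ A ∈ 𝒜, A.Infinite) ∧ ∀ A ∈ 𝒜, ∀ B ∈ 𝒜, A ≠ B → (A ∩ B).Finite

/-- The underlying set of the Isbell–Mrówka space `Ψ(𝒜) = ℕ ∪ 𝒜`. -/
abbrev PsiSpace (𝒜 : Set (Set ℕ)) : Type := ℕ ⊕ ↥𝒜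

/-- The Isbell–Mrówka topology: naturals are isolated, and basic neighborhoods
of `A ∈ 𝒜` are `{A} ∪ (A \ F)` for finite `F`. -/
instance psiTop (𝒜 : Set (Set ℕ)) : TopologicalSpace (PsiSpace 𝒜) where
  IsOpen U := ∀ A : 𝒜, Sum.inr A ∈ U → { n : ℕ | n ∈ (A : Set ℕ) ∧ Sum.inl n ∉ U }.Finite
  isOpen_univ := by
    intro A _
    convert Set.finite_empty using 1
    ext n; simp
  isOpen_inter := by
    intro U V hU hV A hA
    apply ((hU A hA.1).union (hV A hA.2)).subset
    rintro n ⟨h1, h2⟩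
    by_cases h : Sum.inl n ∈ U
    · exact Or.inr ⟨h1, fun hv => h2 ⟨h, hv⟩⟩
    · exact Or.inl ⟨h1, h⟩
  isOpen_sUnion := by
    intro s hs A hA
    obtain ⟨t, ht, hAt⟩ := hA
    apply (hs t ht A hAt).subset
    rintro n ⟨h1, h2⟩
    exact ⟨h1, fun h => h2 ⟨t, ht, h⟩⟩

/-- `st(S, 𝒰) = ⋃ {U ∈ 𝒰 : U ∩ S ≠ ∅}`. -/
def starSet {X : Type*} (S : Set X) (𝒰 : Set (Set X)) : Set X :=
  ⋃₀ { U ∈ 𝒰 | (U ∩ S).Nonempty }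

def StarMenger (X : Type*) [TopologicalSpace X] : Prop :=
  ∀ 𝒰 : ℕ → Set (Set X), (∀ n, ∀ U ∈ 𝒰 n, IsOpen U) → (∀ n, ⋃₀ 𝒰 n = univ) →
    ∃ ℱ : ℕ → Set (Set X), (∀ n, ℱ n ⊆ 𝒰 n ∧ (ℱ n).Finite) ∧
      (⋃ n, starSet (⋃₀ ℱ n) (𝒰 n)) = univ

def StarHurewicz (X : Type*) [TopologicalSpace X] : Prop :=
  ∀ 𝒰 : ℕ → Set (Set X), (∀ n, ∀ U ∈ 𝒰 n, IsOpen U) → (∀ n, ⋃₀ 𝒰 n = univ) →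
    ∃ ℱ : ℕ → Set (Set X), (∀ n, ℱ n ⊆ 𝒰 n ∧ (ℱ n).Finite) ∧
      ∀ x : X, ∀ᶠ n in atTop, x ∈ starSet (⋃₀ ℱ n) (𝒰 n)

def StarRothberger (X : Type*) [TopologicalSpace X] : Prop :=
  ∀ 𝒰 : ℕ → Set (Set X), (∀ n, ∀ U ∈ 𝒰 n, IsOpen U) → (∀ n, ⋃₀ 𝒰 n = univ) →
    ∃ U : ℕ → Set X, (∀ n, U n ∈ 𝒰 n) ∧ (⋃ n, starSet (U n) (𝒰 n)) = univ

def StronglyStarMenger (X : Type*) [TopologicalSpace X] : Prop :=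
  ∀ 𝒰 : ℕ → Set (Set X), (∀ n, ∀ U ∈ 𝒰 n, IsOpen U) → (∀ n, ⋃₀ 𝒰 n = univ) →
    ∃ F : ℕ → Set X, (∀ n, (F n).Finite) ∧ (⋃ n, starSet (F n) (𝒰 n)) = univ

def StronglyStarHurewicz (X : Type*) [TopologicalSpace X] : Prop :=
  ∀ 𝒰 : ℕ → Set (Set X), (∀ n, ∀ U ∈ 𝒰 n, IsOpen U) → (∀ n, ⋃₀ 𝒰 n = univ) →
    ∃ F : ℕ → Set X, (∀ n, (F n).Finite) ∧
      ∀ x : X, ∀ᶠ n in atTop, x ∈ starSet (F n) (𝒰 n)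


namespace SMAux

variable {𝒜 : Set (Set ℕ)}

/-- The basic open set around `A` determined by the bound `f A n`. -/
def bigU (f : 𝒜 → ℕ → ℕ) (n : ℕ) (A : 𝒜) : Set (PsiSpace 𝒜) :=
  {Sum.inr A} ∪ Sum.inl '' ((A : Set ℕ) \ Set.Iio (f A n))

/-- The standard cover at stage `n`. -/
def cov (f : 𝒜 → ℕ → ℕ) (n : ℕ) : Set (Set (PsiSpace 𝒜)) :=
  Set.range (bigU f n) ∪ Set.range (fun k : ℕ => ({Sum.inl k} : Set (PsiSpace 𝒜)))

lemma inr_mem_bigU {f : 𝒜 → ℕ → ℕ} {n : ℕ} {A B : 𝒜} :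
    Sum.inr B ∈ bigU f n A ↔ B = A := by
  simp [bigU]

lemma inl_mem_bigU {f : 𝒜 → ℕ → ℕ} {n : ℕ} {A : 𝒜} {k : ℕ} :
    Sum.inl k ∈ bigU f n A ↔ k ∈ (A : Set ℕ) ∧ f A n ≤ k := by
  simp [bigU, Nat.not_lt]

lemma isOpen_bigU (f : 𝒜 → ℕ → ℕ) (n : ℕ) (A : 𝒜) : IsOpen (bigU f n A) := by
  intro B hB
  rw [inr_mem_bigU] at hB
  rcases hB with rfl
  apply (Set.finite_Iio (f B n)).subset
  rintro k ⟨hk1, hk2⟩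
  rw [inl_mem_bigU] at hk2
  simp only [Set.mem_Iio]
  by_contra h
  exact hk2 ⟨hk1, Nat.not_lt.mp h⟩

lemma cov_isOpen (f : 𝒜 → ℕ → ℕ) (n : ℕ) : ∀ V ∈ cov f n, IsOpen V := by
  rintro V (⟨A, rfl⟩ | ⟨k, rfl⟩)
  · exact isOpen_bigU f n A
  · intro B hB; simp at hB

lemma cov_covers (f : 𝒜 → ℕ → ℕ) (n : ℕ) : ⋃₀ cov f n = univ := by
  apply Set.eq_univ_of_forall
  rintro (k | A)
  · exact ⟨{Sum.inl k}, Or.inr ⟨k, rfl⟩, rfl⟩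
  · exact ⟨bigU f n A, Or.inl ⟨A, rfl⟩, inr_mem_bigU.mpr rfl⟩

end SMAux

open SMAux in
/-- combinatorial characterization of star-Menger Ψ-spaces. -/
theorem starMenger_psiSpace_iff (𝒜 : Set (Set ℕ)) (had : AlmostDisjoint 𝒜) :
    StarMenger (PsiSpace 𝒜) ↔
      ∀ f : 𝒜 → ℕ → ℕ, ∃ ℱ : ℕ → Finset 𝒜, ∀ A : 𝒜, ∃ n : ℕ,
        (((A : Set ℕ) \ Set.Iio (f A n)) ∩
          ⋃ B ∈ ℱ n, ((B : Set ℕ) \ Set.Iio (f B n))).Nonempty := by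
  constructor
  · -- forward direction
    intro hSM f
    obtain ⟨ℱ, hℱsub, hℱcov⟩ := hSM (cov f) (cov_isOpen f) (cov_covers f)
    classical
    -- selector for singletons
    let sel : ℕ → ℕ → Set 𝒜 := fun n k =>
      if h : ∃ B : 𝒜, k ∈ (B : Set ℕ) ∧ f B n ≤ k then {h.choose} else ∅
    let hV : ℕ → Set (PsiSpace 𝒜) → Set 𝒜 := fun n V =>
      if h : ∃ B : 𝒜, Sum.inr B ∈ V then {h.choose}
      else ⋃ k ∈ {k : ℕ | Sum.inl k ∈ V}, sel n k
    have hVfin : ∀ n, ∀ V ∈ ℱ n, (hV n V).Finite := by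
      intro n V hVmem
      rcases (hℱsub n).1 hVmem with (⟨A, rfl⟩ | ⟨k, rfl⟩)
      · simp only [hV]
        rw [dif_pos ⟨A, inr_mem_bigU.mpr rfl⟩]
        exact Set.finite_singleton _
      · simp only [hV]
        rw [dif_neg (by rintro ⟨B, hB⟩; simp at hB)]
        have : {k' : ℕ | (Sum.inl k' : PsiSpace 𝒜) ∈ ({Sum.inl k} : Set (PsiSpace 𝒜))} = {k} := by
          ext k'; simp
        rw [this]
        simp only [Set.biUnion_singleton, sel]
        split
        · exact Set.finite_singleton _
        · exact Set.finite_empty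
    have hFfin : ∀ n, (⋃ V ∈ ℱ n, hV n V).Finite :=
      fun n => Set.Finite.biUnion (hℱsub n).2 (hVfin n)
    refine ⟨fun n => (hFfin n).toFinset, ?_⟩
    intro A
    have hA : Sum.inr A ∈ ⋃ n, starSet (⋃₀ ℱ n) (cov f n) := hℱcov ▸ Set.mem_univ _
    obtain ⟨_, ⟨n, rfl⟩, hst⟩ := hA
    obtain ⟨W, ⟨hW𝒰, hWne⟩, hAW⟩ := hst
    refine ⟨n, ?_⟩
    -- W must be bigU f n A
    have hWeq : W = bigU f n A := by
      rcases hW𝒰 with (⟨C, rfl⟩ | ⟨k, rfl⟩)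
      · rw [inr_mem_bigU] at hAW; rw [hAW]
      · simp at hAW
    subst hWeq
    obtain ⟨x, hxW, V, hVℱ, hxV⟩ := hWne
    have hsub : ∀ B, B ∈ hV n V → B ∈ (hFfin n).toFinset := by
      intro B hB
      rw [Set.Finite.mem_toFinset]
      exact Set.mem_biUnion hVℱ hB
    rcases x with (k | C)
    · -- x = inl k : k ∈ A, f A n ≤ k, inl k ∈ V
      rw [inl_mem_bigU] at hxW
      have key : ∃ B ∈ hV n V, k ∈ (B : Set ℕ) ∧ f B n ≤ k := by
        rcases (hℱsub n).1 hVℱ with (⟨C, rfl⟩ | ⟨k', rfl⟩)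
        · have h1 : ∃ B : 𝒜, Sum.inr B ∈ bigU f n C := ⟨C, inr_mem_bigU.mpr rfl⟩
          have h2 : h1.choose = C := inr_mem_bigU.mp h1.choose_spec
          refine ⟨C, ?_, inl_mem_bigU.mp hxV⟩
          simp only [hV]; rw [dif_pos h1, h2]; rfl
        · have hkk : k' = k := by
            simp only [Set.mem_singleton_iff, Sum.inl.injEq] at hxV
            exact hxV.symm
          subst hkk
          have hex : ∃ B : 𝒜, k' ∈ (B : Set ℕ) ∧ f B n ≤ k' := ⟨A, hxW⟩
          refine ⟨hex.choose, ?_, hex.choose_spec⟩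
          simp only [hV]
          rw [dif_neg (by rintro ⟨B, hB⟩; simp at hB)]
          refine Set.mem_biUnion (show (Sum.inl k' : PsiSpace 𝒜) ∈ ({Sum.inl k'} : Set (PsiSpace 𝒜)) from rfl) ?_
          simp only [sel]
          rw [dif_pos hex]
          rfl
      obtain ⟨B, hB1, hB2, hB3⟩ := key
      refine ⟨k, ⟨hxW.1, Nat.not_lt.mpr hxW.2⟩, ?_⟩
      exact Set.mem_biUnion (hsub B hB1) ⟨hB2, Nat.not_lt.mpr hB3⟩
    · -- x = inr C : C = A, inr A ∈ V, so V = bigU f n A and A ∈ hV n V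
      rw [inr_mem_bigU] at hxW
      rw [hxW] at hxV
      have hAinV : A ∈ hV n V := by
        rcases (hℱsub n).1 hVℱ with (⟨C', rfl⟩ | ⟨k', rfl⟩)
        · have hCA : A = C' := inr_mem_bigU.mp hxV
          have h1 : ∃ B : 𝒜, Sum.inr B ∈ bigU f n C' := ⟨C', inr_mem_bigU.mpr rfl⟩
          have h2 : h1.choose = C' := inr_mem_bigU.mp h1.choose_spec
          simp only [hV]; rw [dif_pos h1, h2]; exact hCA
        · simp at hxV
      obtain ⟨k, hk⟩ := ((had.1 A A.2).diff (Set.finite_Iio (f A n))).nonempty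
      exact ⟨k, hk, Set.mem_biUnion (hsub A hAinV) hk⟩
  · -- backward direction
    intro hcomb 𝒰 h𝒰open h𝒰cov
    classical
    -- for each A and n choose a member of 𝒰 n containing inr A
    have hch : ∀ (A : 𝒜) (n : ℕ), ∃ W ∈ 𝒰 n, Sum.inr A ∈ W := by
      intro A n
      have := h𝒰cov n ▸ Set.mem_univ (Sum.inr A : PsiSpace 𝒜)
      obtain ⟨W, hW, hAW⟩ := this
      exact ⟨W, hW, hAW⟩
    choose W hW𝒰 hWA using hch
    -- bound: beyond f A n, elements of A lie in W A n
    have hbound : ∀ (A : 𝒜) (n : ℕ), ∃ m : ℕ, ∀ k ∈ (A : Set ℕ), m ≤ k → Sum.inl k ∈ W A n := by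
      intro A n
      have hfin := h𝒰open n (W A n) (hW𝒰 A n) A (hWA A n)
      obtain ⟨m, hm⟩ := hfin.bddAbove
      refine ⟨m + 1, fun k hk hmk => ?_⟩
      by_contra h
      have := hm (show k ∈ _ from ⟨hk, h⟩)
      omega
    choose f hf using hbound
    obtain ⟨ℱ, hℱ⟩ := hcomb f
    -- for each n choose a member of 𝒰 n containing inl n
    have hchN : ∀ n : ℕ, ∃ V ∈ 𝒰 n, Sum.inl n ∈ V := by
      intro n
      have := h𝒰cov n ▸ Set.mem_univ (Sum.inl n : PsiSpace 𝒜)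
      obtain ⟨V, hV, hnV⟩ := this
      exact ⟨V, hV, hnV⟩
    choose W0 hW0𝒰 hW0n using hchN
    refine ⟨fun n => insert (W0 n) ((fun B => W B n) '' (ℱ n : Set 𝒜)), ?_, ?_⟩
    · intro n
      constructor
      · rintro V (rfl | ⟨B, _, rfl⟩)
        · exact hW0𝒰 n
        · exact hW𝒰 B n
      · exact Set.Finite.insert _ ((ℱ n).finite_toSet.image _)
    · apply Set.eq_univ_of_forall
      rintro (k | A)
      · refine Set.mem_iUnion.mpr ⟨k, ?_⟩
        refine ⟨W0 k, ⟨hW0𝒰 k, ⟨Sum.inl k, hW0n k, ?_⟩⟩, hW0n k⟩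
        exact ⟨W0 k, Set.mem_insert _ _, hW0n k⟩
      · obtain ⟨n, k, hkA, hkB⟩ := hℱ A
        rw [Set.mem_iUnion₂] at hkB
        obtain ⟨B, hBℱ, hkB'⟩ := hkB
        simp only [Set.mem_diff, Set.mem_Iio, Nat.not_lt] at hkA hkB'
        refine Set.mem_iUnion.mpr ⟨n, ?_⟩
        refine ⟨W A n, ⟨hW𝒰 A n, ⟨Sum.inl k, hf A n k hkA.1 hkA.2, ?_⟩⟩, hWA A n⟩
        exact ⟨W B n, Set.mem_insert_of_mem _ ⟨B, Finset.mem_coe.mpr hBℱ, rfl⟩,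
          hf B n k hkB'.1 hkB'.2⟩
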